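/- Let A be a 3-Lie algebra, Ã = A⊗(tF[t]/(t⁴)) the 3-Lie algebra with bracket [a₁t, a₂t, a₃t] = [a₁,a₂,a₃]t³ and all other triple brackets involving t² or t³ components equal to zero. Fix a subspace U with A = U ⊕ A¹. For a quasiderivation f with associated map f', define l_U(f)(at + bt² + ct³ + ut³) = f(a)t + f'(c)t³ for a, b ∈ A, c ∈ A¹, u ∈ U. Then l_U(f) is a derivation of Ã. -/

import Mathlib

/-- A 3-Lie algebra: a module with a trilinear skew-symmetric bracket
satisfying the fundamental identity. -/
structure ThreeLieAlgebra (F A : Type*) [Field F] [AddCommGroup A] [Module F A] where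
  br : A →ₗ[F] A →ₗ[F] A →ₗ[F] A
  skew₁₂ : ∀ x y z, br x y z = - br y x z
  skew₂₃ : ∀ x y z, br x y z = - br x z y
  fund : ∀ x₁ x₂ x₃ y₂ y₃,
    br (br x₁ x₂ x₃) y₂ y₃ =
      br (br x₁ y₂ y₃) x₂ x₃ + br x₁ (br x₂ y₂ y₃) x₃ + br x₁ x₂ (br x₃ y₂ y₃)

variable {F A : Type*} [Field F] [AddCommGroup A] [Module F A]

/-- `(f₁, f₂, f₃, f') ∈ Δ(A)`. -/
def IsDelta (L : ThreeLieAlgebra F A) (f₁ f₂ f₃ f' : A →ₗ[F] A) : Prop :=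
  ∀ x y z, L.br (f₁ x) y z + L.br x (f₂ y) z + L.br x y (f₃ z) = f' (L.br x y z)

/-- membership in the quasicentroid QΓ(A). -/
def InQC (L : ThreeLieAlgebra F A) (f : A →ₗ[F] A) : Prop :=
  ∀ x y z, L.br (f x) y z = L.br x (f y) z ∧ L.br x (f y) z = L.br x y (f z)

/-- membership in the centroid Γ(A). -/
def InC (L : ThreeLieAlgebra F A) (f : A →ₗ[F] A) : Prop :=
  ∀ x y z, L.br (f x) y z = f (L.br x y z) ∧ L.br x (f y) z = f (L.br x y z) ∧
    L.br x y (f z) = f (L.br x y z)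

/-- The bracket of `Ã = At ⊕ At² ⊕ At³`, modelled as `A × A × A`
(first / second / third components = coefficients of `t`, `t²`, `t³`):
`[a₁t, a₂t, a₃t] = [a₁,a₂,a₃]t³`, all other triple brackets vanish. -/
def brTilde (L : ThreeLieAlgebra F A) (u v w : A × A × A) : A × A × A :=
  (0, 0, L.br u.1 v.1 w.1)

/-- The map `l_U(f)` : `at + bt² + ct³ + ut³ ↦ f(a)t + f'(c)t³`; here `g = f' ∘ π`
where `π` is the projection of `A` onto `A¹` along `U`. -/
def lU (f g : A →ₗ[F] A) : (A × A × A) →ₗ[F] (A × A × A) :=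
  (f ∘ₗ LinearMap.fst F A (A × A)).prod
    ((0 : (A × A × A) →ₗ[F] A).prod
      (g ∘ₗ LinearMap.snd F A A ∘ₗ LinearMap.snd F A (A × A)))

theorem stmt11 (L : ThreeLieAlgebra F A)
    (f f' : A →ₗ[F] A) (hf : IsDelta L f f f f')
    (π : A →ₗ[F] A)
    (hπ_range : ∀ x : A, π x ∈ Submodule.span F {w : A | ∃ a b c, w = L.br a b c})
    (hπ_proj : π ∘ₗ π = π)
    (hπ_id : ∀ x ∈ Submodule.span F {w : A | ∃ a b c, w = L.br a b c}, π x = x) :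
    ∀ u v w : A × A × A,
      lU f (f' ∘ₗ π) (brTilde L u v w)
        = brTilde L (lU f (f' ∘ₗ π) u) v w + brTilde L u (lU f (f' ∘ₗ π) v) w
          + brTilde L u v (lU f (f' ∘ₗ π) w) := by
  intro u v w
  have hmem : L.br u.1 v.1 w.1 ∈ Submodule.span F {w : A | ∃ a b c, w = L.br a b c} :=
    Submodule.subset_span ⟨u.1, v.1, w.1, rfl⟩
  have hπ : π (L.br u.1 v.1 w.1) = L.br u.1 v.1 w.1 := hπ_id _ hmem
  simp only [lU, brTilde, LinearMap.prod_apply, LinearMap.comp_apply, LinearMap.fst_apply,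
    LinearMap.snd_apply, LinearMap.zero_apply, Function.prod, Prod.mk_add_mk, map_zero]
  rw [hπ, ← hf u.1 v.1 w.1]
  simp
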